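/- Let α ≥ 0, D, D₁ > 0, λ ≥ 0 and set D₂ = 12 max{D, D₁} · max{1, λ}. Then there exists C > 0 such that for all t ≥ 0 and x ∈ ℝ³: ∫_{ℝ³} (1+t)^{-α} e^{-|x−y|²/(D(1+t))} e^{-|y|/D₁} dy ≤ C (1+t)^{-α} e^{-3|x|²/(2D₂(1+t))} + C e^{-3(|x|+t)/(2D₂)}. -/

import Mathlib

open MeasureTheory Real

lemma exp_neg_div_le_poly (c s : ℝ) (hc : 0 < c) (hs : 0 ≤ s) :
    Real.exp (-s / c) ≤ (256 * c ^ 4 * Real.exp (1 / c)) * (1 + s) ^ (-(4 : ℝ)) := by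
  have h1 : (0 : ℝ) < 1 + s := by linarith
  have hrw : (1 + s : ℝ) ^ (-(4 : ℝ)) = ((1 + s) ^ (4 : ℕ))⁻¹ := by
    rw [← Real.rpow_natCast (1 + s) 4, ← Real.rpow_neg h1.le]
    norm_num
  rw [hrw, ← div_eq_mul_inv, le_div_iff₀ (by positivity)]
  have hu : (1 + s) / (4 * c) ≤ Real.exp ((1 + s) / (4 * c)) := by
    nlinarith [Real.add_one_le_exp ((1 + s) / (4 * c))]
  have h2 : (1 + s) ≤ 4 * c * Real.exp ((1 + s) / (4 * c)) := by
    rw [div_le_iff₀ (by positivity)] at hu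
    linarith
  have h3 : (1 + s) ^ 4 ≤ (4 * c * Real.exp ((1 + s) / (4 * c))) ^ 4 :=
    pow_le_pow_left₀ h1.le h2 4
  have h4 : (4 * c * Real.exp ((1 + s) / (4 * c))) ^ 4
      = 256 * c ^ 4 * Real.exp ((1 + s) / c) := by
    rw [mul_pow, mul_pow, ← Real.exp_nat_mul]
    have : (4 : ℕ) * ((1 + s) / (4 * c)) = (1 + s) / c := by
      field_simp
      ring
    rw [this]
    norm_num
  have h5 : Real.exp (-s / c) * Real.exp ((1 + s) / c) = Real.exp (1 / c) := by
    rw [← Real.exp_add, ← add_div]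
    norm_num
  calc Real.exp (-s / c) * (1 + s) ^ 4
      ≤ Real.exp (-s / c) * (256 * c ^ 4 * Real.exp ((1 + s) / c)) :=
        mul_le_mul_of_nonneg_left (h3.trans_eq h4) (Real.exp_pos _).le
    _ = 256 * c ^ 4 * (Real.exp (-s / c) * Real.exp ((1 + s) / c)) := by ring
    _ = 256 * c ^ 4 * Real.exp (1 / c) := by rw [h5]

lemma integrable_exp_neg_norm_div (c : ℝ) (hc : 0 < c) :
    Integrable (fun y : EuclideanSpace ℝ (Fin 3) => Real.exp (-‖y‖ / c)) := by
  have h4 : (Module.finrank ℝ (EuclideanSpace ℝ (Fin 3)) : ℝ) < 4 := by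
    rw [finrank_euclideanSpace]
    norm_num
  have hint := (integrable_one_add_norm (E := EuclideanSpace ℝ (Fin 3))
    (μ := volume) (r := 4) h4).const_mul (256 * c ^ 4 * Real.exp (1 / c))
  refine hint.mono' ?_ (Filter.Eventually.of_forall fun y => ?_)
  · exact (Real.continuous_exp.comp (by fun_prop)).aestronglyMeasurable
  · rw [Real.norm_eq_abs, abs_of_nonneg (Real.exp_pos _).le]
    exact exp_neg_div_le_poly c ‖y‖ hc (norm_nonneg y)

set_option maxHeartbeats 1000000 in
/-- Convolution of a diffusion wave with an exponentially localized profile. -/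
theorem diffusion_conv_exp (α D D₁ lam : ℝ) (hα : 0 ≤ α) (hD : 0 < D) (hD₁ : 0 < D₁)
    (hlam : 0 ≤ lam) :
    ∃ C > 0, ∀ t : ℝ, 0 ≤ t → ∀ x : EuclideanSpace ℝ (Fin 3),
      (∫ y : EuclideanSpace ℝ (Fin 3),
          (1 + t) ^ (-α) * Real.exp (-‖x - y‖ ^ 2 / (D * (1 + t))) * Real.exp (-‖y‖ / D₁))
        ≤ C * (1 + t) ^ (-α) *
            Real.exp (-3 * ‖x‖ ^ 2 / (2 * (12 * max D D₁ * max 1 lam) * (1 + t)))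
          + C * Real.exp (-3 * (‖x‖ + t) / (2 * (12 * max D D₁ * max 1 lam))) := by
  have g1int := integrable_exp_neg_norm_div D₁ hD₁
  have g2int := integrable_exp_neg_norm_div (2 * D₁) (by linarith)
  set I₁ : ℝ := ∫ y : EuclideanSpace ℝ (Fin 3), Real.exp (-‖y‖ / D₁) with hI₁def
  set I₂ : ℝ := ∫ y : EuclideanSpace ℝ (Fin 3), Real.exp (-‖y‖ / (2 * D₁)) with hI₂def
  have hI₁0 : 0 ≤ I₁ := integral_nonneg fun y => (Real.exp_pos _).le
  have hI₂0 : 0 ≤ I₂ := integral_nonneg fun y => (Real.exp_pos _).le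
  set E₂ : ℝ := 12 * max D D₁ * max 1 lam with hE₂def
  have hMD : D ≤ max D D₁ := le_max_left _ _
  have hMD₁ : D₁ ≤ max D D₁ := le_max_right _ _
  have hL : (1 : ℝ) ≤ max 1 lam := le_max_left _ _
  have hM0 : (0 : ℝ) < max D D₁ := lt_of_lt_of_le hD hMD
  have hML : max D D₁ ≤ max D D₁ * max 1 lam := le_mul_of_one_le_right hM0.le hL
  have hE12D : 12 * D ≤ E₂ := by rw [hE₂def]; nlinarith
  have hE12D₁ : 12 * D₁ ≤ E₂ := by rw [hE₂def]; nlinarith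
  have hE0 : (0 : ℝ) < E₂ := by nlinarith
  refine ⟨I₁ + I₂ + 1, by positivity, fun t ht x => ?_⟩
  set C : ℝ := I₁ + I₂ + 1 with hCdef
  have hτ0 : (0 : ℝ) < 1 + t := by linarith
  have hτ1 : (1 : ℝ) ≤ 1 + t := by linarith
  have hp0 : (0 : ℝ) < (1 + t) ^ (-α) := Real.rpow_pos_of_pos hτ0 _
  have hn : (0 : ℝ) ≤ ‖x‖ := norm_nonneg x
  set A : ℝ := Real.exp (-‖x‖ ^ 2 / (4 * D * (1 + t))) with hAdef
  set B : ℝ := Real.exp (-‖x‖ / (4 * D₁)) with hBdef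
  set G : ℝ := Real.exp (-3 * ‖x‖ ^ 2 / (2 * E₂ * (1 + t))) with hGdef
  set G₂ : ℝ := Real.exp (-3 * (‖x‖ + t) / (2 * E₂)) with hG₂def
  -- pointwise bound
  have h_pt : ∀ y : EuclideanSpace ℝ (Fin 3),
      (1 + t) ^ (-α) * Real.exp (-‖x - y‖ ^ 2 / (D * (1 + t))) * Real.exp (-‖y‖ / D₁)
        ≤ (1 + t) ^ (-α) *
          (A * Real.exp (-‖y‖ / D₁) + B * Real.exp (-‖y‖ / (2 * D₁))) := by
    intro y
    rcases le_or_gt ‖y‖ (‖x‖ / 2) with hy | hy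
    · have hxy : ‖x‖ / 2 ≤ ‖x - y‖ := by
        have := norm_sub_norm_le x y
        linarith
      have hsq : ‖x‖ ^ 2 / 4 ≤ ‖x - y‖ ^ 2 := by nlinarith [norm_nonneg (x - y)]
      have hexp : Real.exp (-‖x - y‖ ^ 2 / (D * (1 + t))) ≤ A := by
        rw [hAdef]
        apply Real.exp_le_exp.mpr
        rw [div_le_div_iff₀ (by positivity) (by positivity)]
        nlinarith [mul_pos hD hτ0]
      have h1 : (1 + t) ^ (-α) * Real.exp (-‖x - y‖ ^ 2 / (D * (1 + t)))
          * Real.exp (-‖y‖ / D₁) ≤ (1 + t) ^ (-α) * (A * Real.exp (-‖y‖ / D₁)) := by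
        rw [mul_assoc]
        exact mul_le_mul_of_nonneg_left
          (mul_le_mul_of_nonneg_right hexp (Real.exp_pos _).le) hp0.le
      have h2 : 0 ≤ (1 + t) ^ (-α) * (B * Real.exp (-‖y‖ / (2 * D₁))) := by positivity
      rw [mul_add ((1 + t) ^ (-α)) (A * Real.exp (-‖y‖ / D₁))
        (B * Real.exp (-‖y‖ / (2 * D₁)))]
      linarith
    · have hexp1 : Real.exp (-‖x - y‖ ^ 2 / (D * (1 + t))) ≤ 1 := by
        apply Real.exp_le_one_iff.mpr
        have : (0:ℝ) ≤ ‖x - y‖ ^ 2 / (D * (1 + t)) := by positivity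
        rw [neg_div]
        linarith
      have hsplit : -‖y‖ / D₁ = -‖y‖ / (2 * D₁) + -‖y‖ / (2 * D₁) := by
        field_simp
        ring
      have hexp2 : Real.exp (-‖y‖ / (2 * D₁)) ≤ B := by
        rw [hBdef]
        apply Real.exp_le_exp.mpr
        rw [div_le_div_iff₀ (by positivity) (by positivity)]
        nlinarith
      have key : Real.exp (-‖y‖ / D₁) ≤ B * Real.exp (-‖y‖ / (2 * D₁)) := by
        rw [hsplit, Real.exp_add]
        exact mul_le_mul_of_nonneg_right hexp2 (Real.exp_pos _).le
      have h1 : (1 + t) ^ (-α) * Real.exp (-‖x - y‖ ^ 2 / (D * (1 + t)))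
          * Real.exp (-‖y‖ / D₁) ≤ (1 + t) ^ (-α) * (B * Real.exp (-‖y‖ / (2 * D₁))) := by
        calc (1 + t) ^ (-α) * Real.exp (-‖x - y‖ ^ 2 / (D * (1 + t)))
              * Real.exp (-‖y‖ / D₁)
            ≤ (1 + t) ^ (-α) * 1 * Real.exp (-‖y‖ / D₁) := by
              exact mul_le_mul_of_nonneg_right
                (mul_le_mul_of_nonneg_left hexp1 hp0.le) (Real.exp_pos _).le
          _ = (1 + t) ^ (-α) * Real.exp (-‖y‖ / D₁) := by ring
          _ ≤ (1 + t) ^ (-α) * (B * Real.exp (-‖y‖ / (2 * D₁))) :=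
              mul_le_mul_of_nonneg_left key hp0.le
      have h2 : 0 ≤ (1 + t) ^ (-α) * (A * Real.exp (-‖y‖ / D₁)) := by positivity
      rw [mul_add ((1 + t) ^ (-α)) (A * Real.exp (-‖y‖ / D₁))
        (B * Real.exp (-‖y‖ / (2 * D₁)))]
      linarith
  -- integrability of the integrand
  have hfint : Integrable (fun y : EuclideanSpace ℝ (Fin 3) =>
      (1 + t) ^ (-α) * Real.exp (-‖x - y‖ ^ 2 / (D * (1 + t))) * Real.exp (-‖y‖ / D₁)) := by
    refine (g1int.const_mul ((1 + t) ^ (-α))).mono' ?_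
      (Filter.Eventually.of_forall fun y => ?_)
    · apply Continuous.aestronglyMeasurable
      fun_prop
    · rw [Real.norm_eq_abs, abs_of_nonneg (by positivity)]
      have hexp1 : Real.exp (-‖x - y‖ ^ 2 / (D * (1 + t))) ≤ 1 := by
        apply Real.exp_le_one_iff.mpr
        have : (0:ℝ) ≤ ‖x - y‖ ^ 2 / (D * (1 + t)) := by positivity
        rw [neg_div]
        linarith
      calc (1 + t) ^ (-α) * Real.exp (-‖x - y‖ ^ 2 / (D * (1 + t)))
            * Real.exp (-‖y‖ / D₁)
          ≤ (1 + t) ^ (-α) * 1 * Real.exp (-‖y‖ / D₁) :=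
            mul_le_mul_of_nonneg_right
              (mul_le_mul_of_nonneg_left hexp1 hp0.le) (Real.exp_pos _).le
        _ = (1 + t) ^ (-α) * Real.exp (-‖y‖ / D₁) := by ring
  have hgint : Integrable (fun y : EuclideanSpace ℝ (Fin 3) =>
      (1 + t) ^ (-α) *
        (A * Real.exp (-‖y‖ / D₁) + B * Real.exp (-‖y‖ / (2 * D₁)))) :=
    ((g1int.const_mul A).add (g2int.const_mul B)).const_mul _
  have hmono := integral_mono hfint hgint h_pt
  have hval : (∫ y : EuclideanSpace ℝ (Fin 3),
      (1 + t) ^ (-α) *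
        (A * Real.exp (-‖y‖ / D₁) + B * Real.exp (-‖y‖ / (2 * D₁))))
      = (1 + t) ^ (-α) * (A * I₁ + B * I₂) := by
    rw [integral_const_mul, integral_add (g1int.const_mul A) (g2int.const_mul B),
      integral_const_mul, integral_const_mul]
  rw [hval] at hmono
  refine hmono.trans ?_
  -- final scalar estimates
  have hAG : A ≤ G := by
    rw [hAdef, hGdef]
    apply Real.exp_le_exp.mpr
    rw [div_le_div_iff₀ (by positivity) (by positivity)]
    nlinarith [sq_nonneg ‖x‖, mul_nonneg (sq_nonneg ‖x‖) hτ0.le]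
  have hI₁C : I₁ ≤ C := by rw [hCdef]; linarith
  have hI₂C : I₂ ≤ C := by rw [hCdef]; linarith
  have hG0 : (0 : ℝ) ≤ G := (Real.exp_pos _).le
  have hG₂0 : (0 : ℝ) ≤ G₂ := (Real.exp_pos _).le
  have hC0 : (0 : ℝ) < C := by rw [hCdef]; positivity
  show (1 + t) ^ (-α) * (A * I₁ + B * I₂) ≤ C * (1 + t) ^ (-α) * G + C * G₂
  rcases le_or_gt ‖x‖ (1 + t) with hcase | hcase
  · -- everything into the Gaussian term
    have hBG : B ≤ G := by
      rw [hBdef, hGdef]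
      apply Real.exp_le_exp.mpr
      rw [div_le_div_iff₀ (by positivity) (by positivity)]
      nlinarith [mul_le_mul_of_nonneg_left hcase hn, mul_nonneg hn hn]
    have k1 : A * I₁ + B * I₂ ≤ G * (I₁ + I₂) := by
      nlinarith [mul_le_mul_of_nonneg_right hAG hI₁0, mul_le_mul_of_nonneg_right hBG hI₂0]
    have k2 : (1 + t) ^ (-α) * (A * I₁ + B * I₂) ≤ (1 + t) ^ (-α) * (G * (I₁ + I₂)) :=
      mul_le_mul_of_nonneg_left k1 hp0.le
    have k3 : G * (I₁ + I₂) ≤ G * C := mul_le_mul_of_nonneg_left (by rw [hCdef]; linarith) hG0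
    have k4 : 0 ≤ C * G₂ := mul_nonneg hC0.le hG₂0
    nlinarith [mul_le_mul_of_nonneg_left k3 hp0.le]
  · -- B-term into the exponential term
    have hBG₂ : B ≤ G₂ := by
      rw [hBdef, hG₂def]
      apply Real.exp_le_exp.mpr
      rw [div_le_div_iff₀ (by positivity) (by positivity)]
      nlinarith [hn, ht]
    have hp1 : (1 + t) ^ (-α) ≤ 1 :=
      Real.rpow_le_one_of_one_le_of_nonpos hτ1 (neg_nonpos.mpr hα)
    have e1 : (1 + t) ^ (-α) * (A * I₁) ≤ C * (1 + t) ^ (-α) * G := by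
      have : A * I₁ ≤ G * C := mul_le_mul hAG hI₁C hI₁0 hG0
      nlinarith [mul_le_mul_of_nonneg_left this hp0.le]
    have e2 : (1 + t) ^ (-α) * (B * I₂) ≤ C * G₂ := by
      have h0 : 0 ≤ B * I₂ := mul_nonneg (Real.exp_pos _).le hI₂0
      have : B * I₂ ≤ G₂ * C := mul_le_mul hBG₂ hI₂C hI₂0 hG₂0
      nlinarith [mul_le_mul_of_nonneg_left this hp0.le, mul_le_mul hp1 this h0 zero_le_one]
    nlinarith [e1, e2, hp0]
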